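/- For the adapted sampling distribution, E[(I − δ_ω δ_ω*/p_ω) U_k g²(Λ_k) U_k* (I − δ_ω δ_ω*/p_ω)] = Σ_{i=1}^N (‖T_i g‖₂²/p_i) δ_i δ_i* − g²(L), which is dominated (in the Loewner order) by Σ_i (‖T_i g‖₂²/p_i) δ_i δ_i*; hence with p_i = ‖T_i g‖₂²/‖g(λ)‖₂² the total variance satisfies A² ≤ (1/M)·‖g(λ)‖∞²·‖g(λ)‖₂². -/

import Mathlib

/-- Localization of a kernel `g` at vertex `i`. -/
noncomputable def Tloc {N : ℕ} (U : Matrix (Fin N) (Fin N) ℝ) (lam : Fin N → ℝ)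
    (g : ℝ → ℝ) (i : Fin N) : Fin N → ℝ :=
  fun n => ∑ ℓ, g (lam ℓ) * U i ℓ * U n ℓ

/-- The restricted eigenvector matrix `U_k` (columns where `g(λ_ℓ) ≠ 0`). -/
def Uk {N : ℕ} (U : Matrix (Fin N) (Fin N) ℝ) (Ksupp : Finset (Fin N)) :
    Matrix (Fin N) {ℓ // ℓ ∈ Ksupp} ℝ :=
  fun n ℓ => U n ℓ.1

/-- The restricted diagonal matrix `g(Λ_k)`. -/
noncomputable def gLamk {N : ℕ} (lam : Fin N → ℝ) (g : ℝ → ℝ)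
    (Ksupp : Finset (Fin N)) : Matrix {ℓ // ℓ ∈ Ksupp} {ℓ // ℓ ∈ Ksupp} ℝ :=
  Matrix.diagonal fun ℓ => g (lam ℓ.1)

/-- The rank-one matrix `δ_n δ_nᵀ`. -/
def deltaMat {N : ℕ} (n : Fin N) : Matrix (Fin N) (Fin N) ℝ :=
  Matrix.vecMulVec (Pi.single n 1) (Pi.single n 1)

/-- The matrix `g²(L) = U g²(Λ) Uᵀ`. -/
noncomputable def gsqL {N : ℕ} (U : Matrix (Fin N) (Fin N) ℝ) (lam : Fin N → ℝ)
    (g : ℝ → ℝ) : Matrix (Fin N) (Fin N) ℝ :=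
  U * Matrix.diagonal (fun ℓ => (g (lam ℓ)) ^ 2) * U.transpose

/-- The Bernstein summand `X = (1/M) g(Λ_k) U_kᵀ (δ_ω δ_ωᵀ/p_ω − I) U_k g(Λ_k)`. -/
noncomputable def bernsteinX {N : ℕ} (U : Matrix (Fin N) (Fin N) ℝ) (lam : Fin N → ℝ)
    (g : ℝ → ℝ) (Ksupp : Finset (Fin N)) (p : Fin N → ℝ) (M : ℕ) (ω : Fin N) :
    Matrix {ℓ // ℓ ∈ Ksupp} {ℓ // ℓ ∈ Ksupp} ℝ :=
  (1 / (M : ℝ)) •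
    (gLamk lam g Ksupp * (Uk U Ksupp).transpose *
      ((p ω)⁻¹ • deltaMat ω - 1) * Uk U Ksupp * gLamk lam g Ksupp)

open Matrix

lemma deltaMat_apply {N : ℕ} (n i j : Fin N) :
    deltaMat n i j = (if i = n then (1:ℝ) else 0) * (if j = n then 1 else 0) := by
  simp [deltaMat, Matrix.vecMulVec_apply, Pi.single_apply]

lemma sum_deltaMat {N : ℕ} : ∑ n, deltaMat (N := N) n = 1 := by
  ext i j
  simp only [Matrix.sum_apply, deltaMat_apply, Matrix.one_apply]
  rw [Finset.sum_eq_single i] <;> simp +contextual [eq_comm]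

lemma deltaMat_mul_mul {N : ℕ} (G : Matrix (Fin N) (Fin N) ℝ) (n : Fin N) :
    deltaMat n * G * deltaMat n = G n n • deltaMat n := by
  ext i j
  simp [deltaMat_apply, Matrix.mul_apply, Finset.sum_ite_eq, Finset.mul_sum, mul_comm, mul_assoc]

lemma sum_smul_expand {N : ℕ} (G : Matrix (Fin N) (Fin N) ℝ) (p : Fin N → ℝ)
    (hp : ∀ i, p i ≠ 0) (hs : ∑ n, p n = 1) :
    ∑ n : Fin N, p n • ((1 - (p n)⁻¹ • deltaMat n) * G * (1 - (p n)⁻¹ • deltaMat n))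
      = (∑ n : Fin N, ((p n)⁻¹ * G n n) • deltaMat n) - G := by
  have key : ∀ n : Fin N,
      p n • ((1 - (p n)⁻¹ • deltaMat n) * G * (1 - (p n)⁻¹ • deltaMat n))
        = p n • G - deltaMat n * G - G * deltaMat n + ((p n)⁻¹ * G n n) • deltaMat n := by
    intro n
    have h1 : p n * (p n)⁻¹ = 1 := mul_inv_cancel₀ (hp n)
    simp only [Matrix.sub_mul, Matrix.mul_sub, Matrix.one_mul, Matrix.mul_one,
      Matrix.smul_mul, Matrix.mul_smul, deltaMat_mul_mul, smul_smul, smul_sub]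
    rw [h1, one_smul, one_smul]
    have h2 : p n * ((p n)⁻¹ * ((p n)⁻¹ * G n n)) = (p n)⁻¹ * G n n := by
      field_simp
    rw [h2]; abel
  rw [Finset.sum_congr rfl (fun n _ => key n)]
  rw [Finset.sum_add_distrib, Finset.sum_sub_distrib, Finset.sum_sub_distrib]
  rw [← Finset.sum_smul, hs, one_smul, ← Finset.sum_mul, ← Finset.mul_sum,
    sum_deltaMat, one_mul, mul_one]
  abel

section
variable {N : ℕ} (U : Matrix (Fin N) (Fin N) ℝ) (lam : Fin N → ℝ) (g : ℝ → ℝ)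

lemma gsqL_apply (i j : Fin N) :
    gsqL U lam g i j = ∑ ℓ, (g (lam ℓ))^2 * U i ℓ * U j ℓ := by
  simp [gsqL, Matrix.mul_apply, Matrix.diagonal_apply, Matrix.transpose_apply,
    Finset.sum_ite_eq, ite_mul, Finset.mul_sum]
  exact Finset.sum_congr rfl fun ℓ _ => by ring

variable (hU : U.transpose * U = 1)
include hU

lemma orth_cols (ℓ ℓ' : Fin N) : ∑ m, U m ℓ * U m ℓ' = if ℓ = ℓ' then 1 else 0 := by
  have := congrFun (congrFun hU ℓ) ℓ'
  simpa [Matrix.mul_apply, Matrix.one_apply, Matrix.transpose_apply] using this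

lemma Tloc_sq_sum (i : Fin N) :
    ∑ m, (Tloc U lam g i m) ^ 2 = gsqL U lam g i i := by
  have h1 : ∑ m, (Tloc U lam g i m) ^ 2
      = ∑ m, ∑ ℓ, ∑ ℓ', (g (lam ℓ) * U i ℓ * U m ℓ) * (g (lam ℓ') * U i ℓ' * U m ℓ') := by
    refine Finset.sum_congr rfl fun m _ => ?_
    rw [Tloc, pow_two, Finset.sum_mul_sum]
  rw [h1, Finset.sum_comm]
  have h2 : ∀ ℓ, ∑ m, ∑ ℓ', (g (lam ℓ) * U i ℓ * U m ℓ) * (g (lam ℓ') * U i ℓ' * U m ℓ')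
      = ∑ ℓ', (g (lam ℓ) * U i ℓ * (g (lam ℓ') * U i ℓ')) * (if ℓ = ℓ' then 1 else 0) := by
    intro ℓ
    rw [Finset.sum_comm]
    refine Finset.sum_congr rfl fun ℓ' _ => ?_
    rw [← orth_cols U hU ℓ ℓ', Finset.mul_sum]
    exact Finset.sum_congr rfl fun m _ => by ring
  rw [Finset.sum_congr rfl fun ℓ _ => h2 ℓ, gsqL_apply]
  refine Finset.sum_congr rfl fun ℓ _ => ?_
  simp [Finset.sum_ite_eq, mul_ite]
  ring

lemma trace_gsqL : ∑ n, gsqL U lam g n n = ∑ ℓ, (g (lam ℓ))^2 := by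
  have : ∀ n, gsqL U lam g n n = ∑ ℓ, (g (lam ℓ))^2 * (U n ℓ * U n ℓ) := by
    intro n; rw [gsqL_apply]; exact Finset.sum_congr rfl fun ℓ _ => by ring
  rw [Finset.sum_congr rfl fun n _ => this n, Finset.sum_comm]
  refine Finset.sum_congr rfl fun ℓ _ => ?_
  rw [← Finset.mul_sum, orth_cols U hU ℓ ℓ]
  simp

omit hU in
lemma gsqL_posSemidef : (gsqL U lam g).PosSemidef := by
  have hD : (Matrix.diagonal fun ℓ : Fin N => (g (lam ℓ))^2).PosSemidef := by
    rw [Matrix.posSemidef_diagonal_iff]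
    intro i; positivity
  have h := hD.mul_mul_conjTranspose_same U
  have hUc : Uᴴ = Uᵀ := by ext i j; simp [Matrix.conjTranspose_apply]
  rw [hUc] at h
  exact h

omit hU in
lemma Uk_gLamk_sq (Ksupp : Finset (Fin N)) (hK : ∀ ℓ, ℓ ∈ Ksupp ↔ g (lam ℓ) ≠ 0) :
    Uk U Ksupp * gLamk lam g Ksupp * (gLamk lam g Ksupp * (Uk U Ksupp).transpose)
      = gsqL U lam g := by
  ext n m
  rw [gsqL_apply]
  simp only [Matrix.mul_apply, gLamk, Uk, Matrix.diagonal_apply, Matrix.transpose_apply,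
    ite_mul, mul_ite, zero_mul, mul_zero, Finset.sum_ite_eq, Finset.sum_ite_eq',
    Finset.mem_univ, if_true]
  have hz : ∀ (x : Fin N), x ∉ Ksupp → U n x * g (lam x) * (g (lam x) * U m x) = 0 := by
    intro x hx
    have hg : g (lam x) = 0 := by
      by_contra hne; exact hx ((hK x).2 hne)
    rw [hg]; ring
  rw [show (∑ ℓ : {ℓ // ℓ ∈ Ksupp}, U n ℓ.1 * g (lam ℓ.1) * (g (lam ℓ.1) * U m ℓ.1))
      = ∑ ℓ : Fin N, U n ℓ * g (lam ℓ) * (g (lam ℓ) * U m ℓ) from by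
    rw [Finset.sum_coe_sort Ksupp (fun x => U n x * g (lam x) * (g (lam x) * U m x))]
    exact Finset.sum_subset (Finset.subset_univ Ksupp) (fun x _ hx => hz x hx)]
  exact Finset.sum_congr rfl fun ℓ _ => by ring

lemma UkT_mul_Uk (Ksupp : Finset (Fin N)) :
    (Uk U Ksupp).transpose * Uk U Ksupp = 1 := by
  ext ℓ ℓ'
  simp only [Matrix.mul_apply, Matrix.transpose_apply, Uk, Matrix.one_apply]
  rw [orth_cols U hU ℓ.1 ℓ'.1]
  by_cases h : ℓ = ℓ'
  · subst h; rw [if_pos rfl, if_pos rfl]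
  · rw [if_neg (fun h' => h (Subtype.ext h')), if_neg h]

end

lemma prod_regroup {k N : Type*} [Fintype k] [Fintype N] [DecidableEq k] [DecidableEq N]
    (A : Matrix k N ℝ) (B : Matrix N k ℝ) (C C' : Matrix N N ℝ) :
    (A * C * B) * (A * C' * B) = A * (C * (B * A) * C') * B := by
  simp only [Matrix.mul_assoc]

lemma smul_sandwich {k N : Type*} [Fintype k] [Fintype N] (a : ℝ)
    (A : Matrix k N ℝ) (D : Matrix N N ℝ) (B : Matrix N k ℝ) :
    a • (A * D * B) = A * (a • D) * B := by
  rw [Matrix.mul_smul, Matrix.smul_mul]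

/-- Total-variance computation in the Bernstein argument: the expectation
`E[(I − δ_ω δ_ωᵀ/p_ω) g²(L) (I − δ_ω δ_ωᵀ/p_ω)]` equals
`Σ_i (‖T_i g‖₂²/p_i) δ_i δ_iᵀ − g²(L)`, is dominated in the Loewner order by
`Σ_i (‖T_i g‖₂²/p_i) δ_i δ_iᵀ`, and with the adapted probabilities
`p_i = ‖T_i g‖₂²/‖g(λ)‖₂²` the total variance `A² = σ_max(E[Σ_m X_m²])` is at most
`(1/M)·‖g(λ)‖∞²·‖g(λ)‖₂²`. -/
theorem bernstein_total_variance_bound {N : ℕ} (hN : 0 < N)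
    (U : Matrix (Fin N) (Fin N) ℝ) (lam : Fin N → ℝ) (hU : U.transpose * U = 1)
    (g : ℝ → ℝ) (Ksupp : Finset (Fin N)) (hK : ∀ ℓ, ℓ ∈ Ksupp ↔ g (lam ℓ) ≠ 0)
    (p : Fin N → ℝ) (hp : ∀ i, 0 < p i)
    (hpdef : ∀ i, p i = (∑ n, (Tloc U lam g i n) ^ 2) / (∑ ℓ, (g (lam ℓ)) ^ 2))
    (M : ℕ) (hM : 0 < M) :
    (∑ n : Fin N, p n •
          ((1 - (p n)⁻¹ • deltaMat n) * gsqL U lam g * (1 - (p n)⁻¹ • deltaMat n))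
        = (∑ n : Fin N, ((∑ m, (Tloc U lam g n m) ^ 2) / p n) • deltaMat n)
            - gsqL U lam g) ∧
      Matrix.PosSemidef
        ((∑ n : Fin N, ((∑ m, (Tloc U lam g n m) ^ 2) / p n) • deltaMat n)
          - ∑ n : Fin N, p n •
              ((1 - (p n)⁻¹ • deltaMat n) * gsqL U lam g
                * (1 - (p n)⁻¹ • deltaMat n))) ∧
      ∀ v : {ℓ // ℓ ∈ Ksupp} → ℝ,
        v ⬝ᵥ (((M : ℝ) • ∑ n : Fin N, p n •
            (bernsteinX U lam g Ksupp p M n * bernsteinX U lam g Ksupp p M n)).mulVec v)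
          ≤ ((1 / (M : ℝ)) * (⨆ ℓ : Fin N, (g (lam ℓ)) ^ 2) * ∑ ℓ, (g (lam ℓ)) ^ 2)
              * (v ⬝ᵥ v) := by
  set G := gsqL U lam g with hGdef
  set T := ∑ ℓ, (g (lam ℓ)) ^ 2 with hTdef
  have hpne : ∀ i, p i ≠ 0 := fun i => ne_of_gt (hp i)
  have hTne : T ≠ 0 := by
    intro h
    have h0 := hp ⟨0, hN⟩
    rw [hpdef, h, div_zero] at h0
    exact lt_irrefl 0 h0
  have hTnonneg : 0 ≤ T := Finset.sum_nonneg fun ℓ _ => sq_nonneg _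
  have hTpos : 0 < T := lt_of_le_of_ne hTnonneg (Ne.symm hTne)
  have hGd : ∀ n, (∑ m, (Tloc U lam g n m) ^ 2) = G n n := fun n => Tloc_sq_sum U lam g hU n
  have hcoef : ∀ n, (∑ m, (Tloc U lam g n m) ^ 2) / p n = (p n)⁻¹ * G n n := by
    intro n; rw [hGd n, div_eq_inv_mul]
  have hsum1 : ∑ n, p n = 1 := by
    have h : ∀ n, p n = G n n / T := fun n => by rw [hpdef, hGd]
    rw [Finset.sum_congr rfl fun n _ => h n, ← Finset.sum_div,
      trace_gsqL U lam g hU, div_self hTne]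
  have hGnn : ∀ n, G n n ≠ 0 := by
    intro n h
    have h2 := hp n
    rw [hpdef, hGd, h, zero_div] at h2
    exact lt_irrefl 0 h2
  have hcoefT : ∀ n, (p n)⁻¹ * G n n = T := by
    intro n
    rw [hpdef n, hGd n, inv_div, div_mul_cancel₀ _ (hGnn n)]
  have part1 : ∑ n : Fin N, p n •
      ((1 - (p n)⁻¹ • deltaMat n) * G * (1 - (p n)⁻¹ • deltaMat n))
      = (∑ n : Fin N, ((∑ m, (Tloc U lam g n m) ^ 2) / p n) • deltaMat n) - G := by
    simp only [hcoef]
    exact sum_smul_expand G p hpne hsum1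
  refine ⟨part1, ?_, ?_⟩
  · rw [part1, sub_sub_cancel]
    exact gsqL_posSemidef U lam g
  · intro v
    set A := gLamk lam g Ksupp * (Uk U Ksupp).transpose with hAdef
    set B := Uk U Ksupp * gLamk lam g Ksupp with hBdef
    have hBA : B * A = G := Uk_gLamk_sq U lam g Ksupp hK
    have hAB : A = B.transpose := by
      rw [hAdef, hBdef, Matrix.transpose_mul]
      congr 1
      rw [gLamk]
      exact (Matrix.diagonal_transpose _).symm
    set S := ∑ n : Fin N, ((p n)⁻¹ * G n n) • deltaMat n with hSdef
    have hmain : ((M : ℝ) • ∑ n : Fin N, p n •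
        (bernsteinX U lam g Ksupp p M n * bernsteinX U lam g Ksupp p M n))
        = (1 / (M : ℝ)) • (A * (S - G) * B) := by
      have hX : ∀ n, bernsteinX U lam g Ksupp p M n * bernsteinX U lam g Ksupp p M n
          = ((1 / (M : ℝ)) * (1 / (M : ℝ))) •
            (A * ((1 - (p n)⁻¹ • deltaMat n) * G * (1 - (p n)⁻¹ • deltaMat n)) * B) := by
        intro n
        rw [bernsteinX, smul_mul_smul_comm]
        congr 1
        have h5 : gLamk lam g Ksupp * (Uk U Ksupp).transpose * ((p n)⁻¹ • deltaMat n - 1) *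
            Uk U Ksupp * gLamk lam g Ksupp
            = A * ((p n)⁻¹ • deltaMat n - 1) * B := by
          rw [hAdef, hBdef]; simp only [Matrix.mul_assoc]
        rw [h5, prod_regroup, hBA]
        have h6 : ((p n)⁻¹ • deltaMat n - 1) = -(1 - (p n)⁻¹ • deltaMat n) := by
          rw [neg_sub]
        rw [h6, Matrix.neg_mul, Matrix.mul_neg, Matrix.neg_mul, neg_neg]
      simp only [hX]
      rw [Finset.smul_sum]
      have h7 : ∀ n : Fin N, (M : ℝ) • p n • (((1 / (M : ℝ)) * (1 / (M : ℝ))) •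
          (A * ((1 - (p n)⁻¹ • deltaMat n) * G * (1 - (p n)⁻¹ • deltaMat n)) * B))
          = ((M : ℝ) * ((1 / (M : ℝ)) * (1 / (M : ℝ)))) •
            (A * (p n • ((1 - (p n)⁻¹ • deltaMat n) * G * (1 - (p n)⁻¹ • deltaMat n))) * B) := by
        intro n
        rw [smul_comm (p n) _, smul_smul, ← smul_sandwich]
      simp only [h7]
      have hMne : (M : ℝ) ≠ 0 := Nat.cast_ne_zero.2 hM.ne'
      have h1 : (M : ℝ) * ((1 / (M : ℝ)) * (1 / (M : ℝ))) = 1 / (M : ℝ) := by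
        field_simp
      simp only [h1]
      rw [← Finset.smul_sum, ← Matrix.sum_mul, ← Matrix.mul_sum,
        sum_smul_expand G p hpne hsum1]
    rw [hmain]
    -- quadratic form
    set w : Fin N → ℝ := B.mulVec v with hwdef
    have hquad : ∀ Q : Matrix (Fin N) (Fin N) ℝ,
        v ⬝ᵥ (A * Q * B).mulVec v = w ⬝ᵥ Q.mulVec w := by
      intro Q
      rw [Matrix.mul_assoc, ← Matrix.mulVec_mulVec, Matrix.dotProduct_mulVec,
        ← Matrix.mulVec_mulVec]
      congr 1
      rw [hAB, Matrix.vecMul_transpose]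
    rw [Matrix.smul_mulVec, dotProduct_smul, hquad (S - G)]
    have hpsd : 0 ≤ w ⬝ᵥ G.mulVec w := by
      have := (gsqL_posSemidef U lam g).dotProduct_mulVec_nonneg w
      simpa using this
    have hSw : w ⬝ᵥ S.mulVec w = T * (w ⬝ᵥ w) := by
      have hS1 : S = T • (1 : Matrix (Fin N) (Fin N) ℝ) := by
        rw [hSdef]
        simp only [hcoefT]
        rw [← Finset.smul_sum, sum_deltaMat]
      rw [hS1, Matrix.smul_mulVec, Matrix.one_mulVec, dotProduct_smul]
      rfl
    have hstep1 : w ⬝ᵥ (S - G).mulVec w ≤ T * (w ⬝ᵥ w) := by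
      rw [Matrix.sub_mulVec, dotProduct_sub, ← hSw]
      linarith
    have hww : w ⬝ᵥ w ≤ (⨆ ℓ : Fin N, (g (lam ℓ)) ^ 2) * (v ⬝ᵥ v) := by
      have hBtB : B.transpose * B = Matrix.diagonal (fun ℓ : {ℓ // ℓ ∈ Ksupp} => (g (lam ℓ.1)) ^ 2) := by
        rw [hBdef, Matrix.transpose_mul]
        have : (gLamk lam g Ksupp)ᵀ = gLamk lam g Ksupp := by
          rw [gLamk]; exact Matrix.diagonal_transpose _
        rw [this, Matrix.mul_assoc, ← Matrix.mul_assoc (Uk U Ksupp).transpose,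
          UkT_mul_Uk U hU Ksupp, Matrix.one_mul, gLamk, Matrix.diagonal_mul_diagonal]
        congr 1
        funext ℓ
        ring
      have hw2 : w ⬝ᵥ w = ∑ ℓ : {ℓ // ℓ ∈ Ksupp}, (g (lam ℓ.1)) ^ 2 * v ℓ * v ℓ := by
        rw [hwdef, Matrix.dotProduct_mulVec, ← Matrix.mulVec_transpose,
          Matrix.mulVec_mulVec, hBtB]
        rw [dotProduct]
        refine Finset.sum_congr rfl fun ℓ _ => ?_
        rw [Matrix.mulVec_diagonal]
      rw [hw2, dotProduct, Finset.mul_sum]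
      refine Finset.sum_le_sum fun ℓ _ => ?_
      have hle : (g (lam ℓ.1)) ^ 2 ≤ ⨆ ℓ' : Fin N, (g (lam ℓ')) ^ 2 := by
        exact le_ciSup (f := fun ℓ' : Fin N => (g (lam ℓ')) ^ 2)
          (Set.Finite.bddAbove (Set.finite_range _)) ℓ.1
      have hvv : 0 ≤ v ℓ * v ℓ := mul_self_nonneg _
      calc (g (lam ℓ.1)) ^ 2 * v ℓ * v ℓ = (g (lam ℓ.1)) ^ 2 * (v ℓ * v ℓ) := by ring
        _ ≤ (⨆ ℓ' : Fin N, (g (lam ℓ')) ^ 2) * (v ℓ * v ℓ) :=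
            mul_le_mul_of_nonneg_right hle hvv
    have hMnn : (0:ℝ) ≤ 1 / (M : ℝ) := by positivity
    have hsup : (0:ℝ) ≤ ⨆ ℓ : Fin N, (g (lam ℓ)) ^ 2 := by
      have : (g (lam ⟨0, hN⟩)) ^ 2 ≤ ⨆ ℓ : Fin N, (g (lam ℓ)) ^ 2 :=
        le_ciSup (f := fun ℓ' : Fin N => (g (lam ℓ')) ^ 2)
          (Set.Finite.bddAbove (Set.finite_range _)) (⟨0, hN⟩ : Fin N)
      exact le_trans (sq_nonneg _) this
    calc (1 / (M : ℝ)) * (w ⬝ᵥ (S - G).mulVec w)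
        ≤ (1 / (M : ℝ)) * (T * (w ⬝ᵥ w)) :=
          mul_le_mul_of_nonneg_left hstep1 hMnn
      _ ≤ (1 / (M : ℝ)) * (T * ((⨆ ℓ : Fin N, (g (lam ℓ)) ^ 2) * (v ⬝ᵥ v))) := by
          apply mul_le_mul_of_nonneg_left _ hMnn
          exact mul_le_mul_of_nonneg_left hww hTnonneg
      _ = ((1 / (M : ℝ)) * (⨆ ℓ : Fin N, (g (lam ℓ)) ^ 2) * T) * (v ⬝ᵥ v) := by ring
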